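/- For a prime p and integers m ≥ 1, q ≥ 1, the p-adic valuation of m!/(⌊m/q⌋!)^q is at most q · log m / log p. In particular, if p > m then p does not divide m!/(⌊m/q⌋!)^q. -/

import Mathlib

/-- For a prime `p` and integers `m ≥ 1`, `q ≥ 1`, the `p`-adic valuation of
`m!/(⌊m/q⌋!)^q` is at most `q · log m / log p`; in particular if `p > m` then
`p` does not divide `m!/(⌊m/q⌋!)^q`. -/
theorem factorization_factorial_ratio_le (p m q : ℕ) (hp : p.Prime)
    (hm : 1 ≤ m) (hq : 1 ≤ q) :
    (((m.factorial / ((m / q).factorial) ^ q).factorization p : ℕ) : ℝ)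
        ≤ q * Real.log m / Real.log p ∧
      (m < p → ¬ p ∣ m.factorial / ((m / q).factorial) ^ q) := by
  haveI : Fact p.Prime := ⟨hp⟩
  set a := m / q with ha
  -- (a!)^q divides m!
  have hdvd : (a.factorial) ^ q ∣ m.factorial := by
    have h1 : ∏ _i ∈ Finset.range q, a.factorial ∣
        (∑ _i ∈ Finset.range q, a).factorial :=
      Nat.prod_factorial_dvd_factorial_sum _ _
    simp only [Finset.prod_const, Finset.sum_const, Finset.card_range, smul_eq_mul] at h1
    exact h1.trans (Nat.factorial_dvd_factorial (by
      rw [mul_comm]; exact Nat.div_mul_le_self m q))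
  have hfacpos : 0 < m.factorial / a.factorial ^ q :=
    Nat.div_pos (Nat.le_of_dvd m.factorial_pos hdvd) (pow_pos a.factorial_pos q)
  -- factorization of the quotient
  have hfact : (m.factorial / a.factorial ^ q).factorization p
      = padicValNat p m.factorial - q * padicValNat p a.factorial := by
    rw [Nat.factorization_div hdvd, Finsupp.tsub_apply, Nat.factorization_pow,
      Finsupp.smul_apply, smul_eq_mul, Nat.factorization_def _ hp,
      Nat.factorization_def _ hp]
  set b := Nat.log p m + 1 with hb
  have hblt : Nat.log p m < b := Nat.lt_succ_self _
  have hmfac : padicValNat p m.factorial = ∑ i ∈ Finset.Ico 1 b, m / p ^ i :=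
    padicValNat_factorial hblt
  have hafac : padicValNat p a.factorial = ∑ i ∈ Finset.Ico 1 b, a / p ^ i :=
    padicValNat_factorial (lt_of_le_of_lt (Nat.log_mono_right (Nat.div_le_self m q)) hblt)
  have hterm : ∀ i, q * (a / p ^ i) ≤ m / p ^ i := by
    intro i
    have : a / p ^ i = (m / p ^ i) / q := by
      rw [ha, Nat.div_div_eq_div_mul, Nat.div_div_eq_div_mul, mul_comm]
    rw [this]
    calc q * (m / p ^ i / q) = (m / p ^ i / q) * q := mul_comm _ _
      _ ≤ m / p ^ i := Nat.div_mul_le_self _ _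
  have htermsub : ∀ i, m / p ^ i - q * (a / p ^ i) ≤ q - 1 := by
    intro i
    have h1 : a / p ^ i = (m / p ^ i) / q := by
      rw [ha, Nat.div_div_eq_div_mul, Nat.div_div_eq_div_mul, mul_comm]
    rw [h1]
    have hd := Nat.div_add_mod (m / p ^ i) q
    have hmod := Nat.mod_lt (m / p ^ i) (show 0 < q by omega)
    omega
  have hbound : (m.factorial / a.factorial ^ q).factorization p ≤ (q - 1) * Nat.log p m := by
    rw [hfact, hmfac, hafac, Finset.mul_sum, ← Finset.sum_tsub_distrib _ (fun i _ => hterm i)]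
    calc ∑ i ∈ Finset.Ico 1 b, (m / p ^ i - q * (a / p ^ i))
        ≤ ∑ _i ∈ Finset.Ico 1 b, (q - 1) :=
          Finset.sum_le_sum fun i _ => htermsub i
      _ = (q - 1) * Nat.log p m := by
          simp [Nat.card_Ico, hb, mul_comm]
  constructor
  · have hL : (Nat.log p m : ℝ) ≤ Real.log m / Real.log p := by
      simpa [Real.logb] using Real.natLog_le_logb m p
    have hlogp : 0 < Real.log p := Real.log_pos (by exact_mod_cast hp.one_lt)
    have hLnn : (0 : ℝ) ≤ Real.log m / Real.log p := by
      apply div_nonneg _ hlogp.le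
      exact Real.log_natCast_nonneg m
    calc ((m.factorial / a.factorial ^ q).factorization p : ℝ)
        ≤ ((q - 1) * Nat.log p m : ℕ) := by exact_mod_cast hbound
      _ = ((q : ℝ) - 1) * (Nat.log p m : ℝ) := by
          push_cast [Nat.cast_sub hq]; ring
      _ ≤ (q : ℝ) * (Real.log m / Real.log p) := by
          apply mul_le_mul (by linarith) hL (Nat.cast_nonneg _) (Nat.cast_nonneg _)
      _ = q * Real.log m / Real.log p := by ring
  · intro hmp hpdvd
    have : p ∣ m.factorial := hpdvd.trans ⟨a.factorial ^ q, (Nat.div_mul_cancel hdvd).symm⟩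
    exact absurd ((Nat.Prime.dvd_factorial hp).mp this) (not_le.mpr hmp)
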